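/- arXiv:1805.11311 — 3 statements merged into one kernel-verified Lean document; each statement's English description precedes it below -/
import Mathlib

section
/- Let B₁ and B₂ be n×n real matrices all of whose entries are nonnegative. Then ρ(B₁ + B₂)/2 ≤ ρ({B₁, B₂}) ≤ ρ(B₁ + B₂), i.e. the joint spectral radius of {B₁, B₂} lies between half the spectral radius of the sum B₁ + B₂ and the spectral radius of the sum B₁ + B₂. -/
/-- Spectral radius of a real square matrix: the largest absolute value of its
complex eigenvalues (elements of the spectrum of the complexified matrix). -/
noncomputable def specRad {n : ℕ} (A : Matrix (Fin n) (Fin n) ℝ) : ℝ :=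
  sSup {r : ℝ | ∃ μ ∈ spectrum ℂ (A.map Complex.ofReal), r = ‖μ‖}

/-- The set 𝒜^j of all products A₁A₂⋯A_j of j matrices from 𝒜. -/
def prodSet {n : ℕ} (𝒜 : Set (Matrix (Fin n) (Fin n) ℝ)) (j : ℕ) :
    Set (Matrix (Fin n) (Fin n) ℝ) :=
  {A | ∃ f : Fin j → Matrix (Fin n) (Fin n) ℝ, (∀ i, f i ∈ 𝒜) ∧ A = (List.ofFn f).prod}

/-- Joint spectral radius: ρ(𝒜) = limsup_{j→∞} (sup_{A ∈ 𝒜^j} ρ(A))^{1/j}. -/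
noncomputable def jsr {n : ℕ} (𝒜 : Set (Matrix (Fin n) (Fin n) ℝ)) : ℝ :=
  Filter.limsup
    (fun j : ℕ => (sSup (specRad '' prodSet 𝒜 j)) ^ ((1 : ℝ) / j)) Filter.atTop

open Module Filter Set


lemma ratio_contradiction {a b C : ℝ} (hb : 0 ≤ b) (hba : b < a)
    (h : ∀ᶠ k in atTop, a ^ k ≤ C * b ^ k) : False := by
  have ha : 0 < a := lt_of_le_of_lt hb hba
  have hr : b / a < 1 := (div_lt_one ha).mpr hba
  have hr0 : 0 ≤ b / a := div_nonneg hb ha.le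
  have ht : Tendsto (fun k : ℕ => C * (b / a) ^ k) atTop (nhds 0) := by
    simpa using (tendsto_pow_atTop_nhds_zero_of_lt_one hr0 hr).const_mul C
  have h2 : ∀ᶠ k in atTop, C * (b / a) ^ k < 1 :=
    ht.eventually (gt_mem_nhds (by norm_num))
  obtain ⟨k, h1k, h2k⟩ := (h.and h2).exists
  have hak : (0:ℝ) < a ^ k := pow_pos ha k
  have hbk : C * b ^ k = (C * (b / a) ^ k) * a ^ k := by
    rw [div_pow, mul_assoc, div_mul_cancel₀ _ (ne_of_gt hak)]
  rw [hbk] at h1k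
  have := mul_lt_of_lt_one_left hak h2k
  linarith

lemma abs_le_of_growth (s : Multiset ℂ) (C r : ℝ) (hr : 0 ≤ r)
    (h : ∀ᶠ k in atTop, norm ((s.map (· ^ k)).sum) ≤ C * r ^ k) :
    ∀ μ ∈ s, norm μ ≤ r := by
  classical
  by_contra hcon
  push_neg at hcon
  obtain ⟨μ₀, hμ₀s, hμ₀⟩ := hcon
  set sb := s.filter (fun μ => r < norm μ) with hsb
  set ss := s.filter (fun μ => ¬ r < norm μ) with hss
  have hsplit : sb + ss = s := Multiset.filter_add_not _ s
  set C' : ℝ := |C| + (Multiset.card s : ℝ) with hC'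
  have hb : ∀ k : ℕ, norm ((s.map (· ^ k)).sum) ≤ C * r ^ k →
      norm ((sb.map (· ^ k)).sum) ≤ C' * r ^ k := by
    intro k hk
    have hsum : (sb.map (· ^ k)).sum = (s.map (· ^ k)).sum - (ss.map (· ^ k)).sum := by
      rw [← hsplit, Multiset.map_add, Multiset.sum_add]; ring
    have hsmall : norm ((ss.map (· ^ k)).sum) ≤ (Multiset.card s : ℝ) * r ^ k := by
      calc norm ((ss.map (· ^ k)).sum) ≤ (((ss.map (· ^ k)).map norm)).sum := by
            simpa using norm_multiset_sum_le (ss.map (· ^ k))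
        _ ≤ (Multiset.card ((ss.map (· ^ k)).map norm)) • (r ^ k) := by
            apply Multiset.sum_le_card_nsmul
            intro xv hx
            rw [Multiset.map_map] at hx
            obtain ⟨μ', hμ', rfl⟩ := Multiset.mem_map.mp hx
            have : norm μ' ≤ r := not_lt.mp (Multiset.mem_filter.mp hμ').2
            simpa [map_pow] using pow_le_pow_left₀ (norm_nonneg μ') this k
        _ ≤ (Multiset.card s : ℝ) * r ^ k := by
            have h1 : Multiset.card ((ss.map (· ^ k)).map norm) ≤ Multiset.card s := by
              simp only [Multiset.card_map]
              exact Multiset.card_le_card (Multiset.filter_le _ s)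
            rw [nsmul_eq_mul]
            exact mul_le_mul_of_nonneg_right (by exact_mod_cast h1) (pow_nonneg hr k)
    rw [hsum]
    calc norm ((s.map (· ^ k)).sum - (ss.map (· ^ k)).sum)
        ≤ norm ((s.map (· ^ k)).sum) + norm ((ss.map (· ^ k)).sum) := by
          simpa using norm_sub_le _ _
      _ ≤ C * r ^ k + (Multiset.card s : ℝ) * r ^ k := add_le_add hk hsmall
      _ ≤ C' * r ^ k := by
          have : C ≤ |C| := le_abs_self C
          have hrk : (0:ℝ) ≤ r ^ k := pow_nonneg hr k
          rw [hC']; nlinarith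
  -- set up Vandermonde
  set Λ : Finset ℂ := sb.toFinset with hΛ
  have hμ₀b : μ₀ ∈ sb := Multiset.mem_filter.mpr ⟨hμ₀s, hμ₀⟩
  set sN := Λ.card with hsN
  set e := Λ.equivFin with he
  set lam : Fin sN → ℂ := fun i => ((e.symm i : {x // x ∈ Λ}) : ℂ) with hlam
  have hinj : Function.Injective lam := fun i j hij => by
    apply e.symm.injective
    exact Subtype.coe_injective hij
  set V : Matrix (Fin sN) (Fin sN) ℂ := (Matrix.vandermonde lam).transpose with hV
  have hdet : IsUnit V.det := by
    rw [hV, Matrix.det_transpose, Matrix.det_vandermonde]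
    rw [isUnit_iff_ne_zero]
    apply Finset.prod_ne_zero_iff.mpr
    intro i _
    apply Finset.prod_ne_zero_iff.mpr
    intro j hj
    have hij : i ≠ j := by
      intro hh; subst hh; exact absurd (Finset.mem_Ioi.mp hj) (lt_irrefl _)
    exact sub_ne_zero_of_ne fun hc => hij (hinj hc.symm)
  set b : ℕ → ℂ := fun k => (sb.map (· ^ k)).sum with hbdef
  set x : ℕ → Fin sN → ℂ := fun k i => (sb.count (lam i) : ℂ) * (lam i) ^ k with hx
  have hsum_eq : ∀ m : ℕ, b m = ∑ i : Fin sN, (sb.count (lam i) : ℂ) * (lam i) ^ m := by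
    intro m
    simp only [hbdef]
    rw [Finset.sum_multiset_map_count]
    rw [← Finset.sum_attach Λ (fun μ => sb.count μ • μ ^ m), ← Finset.univ_eq_attach]
    rw [← e.symm.sum_comp (fun a : {x // x ∈ Λ} => sb.count (a : ℂ) • ((a : ℂ)) ^ m)]
    simp [nsmul_eq_mul, hlam]
    convert rfl
  have hmulVec : ∀ k : ℕ, V.mulVec (x k) = fun j : Fin sN => b (k + (j : ℕ)) := by
    intro k
    funext j
    rw [Matrix.mulVec, hsum_eq (k + j)]
    simp only [dotProduct, hV, Matrix.transpose_apply, Matrix.vandermonde, hx]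
    refine Finset.sum_congr rfl fun i _ => ?_
    simp only [Matrix.of_apply]
    ring
  have hxinv : ∀ k : ℕ, x k = V⁻¹.mulVec (fun j => b (k + (j : ℕ))) := by
    intro k
    rw [← hmulVec k, Matrix.mulVec_mulVec, Matrix.nonsing_inv_mul V hdet, Matrix.one_mulVec]
  -- index of μ₀
  have hμ₀Λ : μ₀ ∈ Λ := Multiset.mem_toFinset.mpr hμ₀b
  set i₀ : Fin sN := e ⟨μ₀, hμ₀Λ⟩ with hi₀
  have hlam₀ : lam i₀ = μ₀ := by simp [hlam, hi₀]
  set D : ℝ := ∑ j : Fin sN, norm (V⁻¹ i₀ j) * (C' * r ^ (j : ℕ)) with hD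
  have hfin : ∀ᶠ k in atTop, norm μ₀ ^ k ≤ D * r ^ k := by
    obtain ⟨K, hK⟩ := eventually_atTop.mp h
    rw [eventually_atTop]
    refine ⟨K, fun k hk => ?_⟩
    have hxk : norm (x k i₀) ≤ D * r ^ k := by
      rw [hxinv k]
      calc norm (∑ j, V⁻¹ i₀ j * b (k + (j:ℕ)))
          ≤ ∑ j, norm (V⁻¹ i₀ j * b (k + (j:ℕ))) := norm_sum_le _ _
        _ ≤ ∑ j : Fin sN, norm (V⁻¹ i₀ j) * (C' * r ^ (j:ℕ)) * r ^ k := by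
            refine Finset.sum_le_sum fun j _ => ?_
            rw [norm_mul]
            have hbj : norm (b (k + (j:ℕ))) ≤ C' * r ^ (k + (j:ℕ)) :=
              hb _ (hK _ (le_trans hk (Nat.le_add_right _ _)))
            calc norm (V⁻¹ i₀ j) * norm (b (k + (j:ℕ)))
                ≤ norm (V⁻¹ i₀ j) * (C' * r ^ (k + (j:ℕ))) :=
                  mul_le_mul_of_nonneg_left hbj (norm_nonneg _)
              _ = norm (V⁻¹ i₀ j) * (C' * r ^ (j:ℕ)) * r ^ k := by
                  rw [pow_add]; ring
        _ = D * r ^ k := by rw [hD, ← Finset.sum_mul]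
    have hxval : norm (x k i₀) = (sb.count μ₀ : ℝ) * norm μ₀ ^ k := by
      rw [hx]; simp [hlam₀, norm_mul, norm_pow, Complex.norm_natCast]
    have hcount : (1:ℝ) ≤ (sb.count μ₀ : ℝ) := by
      exact_mod_cast Multiset.one_le_count_iff_mem.mpr hμ₀b
    have habs : norm μ₀ ^ k ≤ norm (x k i₀) := by
      rw [hxval]
      nlinarith [pow_nonneg (norm_nonneg μ₀) k]
    linarith
  exact ratio_contradiction hr hμ₀ hfin


variable {n : ℕ}

lemma trace_map_ofReal (M : Matrix (Fin n) (Fin n) ℝ) :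
    (M.map Complex.ofReal).trace = (M.trace : ℂ) := by
  simp [Matrix.trace, Matrix.diag, Matrix.map_apply]

lemma map_ofReal_pow (M : Matrix (Fin n) (Fin n) ℝ) (k : ℕ) :
    (M.map Complex.ofReal) ^ k = (M ^ k).map Complex.ofReal := by
  have : ∀ X : Matrix (Fin n) (Fin n) ℝ, X.map Complex.ofReal
      = Complex.ofRealHom.mapMatrix X := fun X => rfl
  simp only [this, ← map_pow]

lemma multiset_rep_sum (Λ : Finset ℂ) (m : ℂ → ℕ) (k : ℕ) :
    ((∑ μ ∈ Λ, (m μ) • ({μ} : Multiset ℂ)).map (· ^ k)).sum = ∑ μ ∈ Λ, (m μ : ℂ) * μ ^ k := by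
  classical
  induction Λ using Finset.induction_on with
  | empty => simp
  | @insert a s ha ih =>
    rw [Finset.sum_insert ha, Finset.sum_insert ha, Multiset.map_add, Multiset.sum_add, ih,
      Multiset.nsmul_singleton, Multiset.map_replicate, Multiset.sum_replicate, nsmul_eq_mul]

lemma multiset_rep_card (Λ : Finset ℂ) (m : ℂ → ℕ) :
    (∑ μ ∈ Λ, (m μ) • ({μ} : Multiset ℂ)).card = ∑ μ ∈ Λ, m μ := by
  classical
  induction Λ using Finset.induction_on with
  | empty => simp
  | @insert a s ha ih =>
    rw [Finset.sum_insert ha, Finset.sum_insert ha, Multiset.card_add, ih]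
    simp

lemma matrix_exists_rep (M : Matrix (Fin n) (Fin n) ℝ) :
    ∃ s : Multiset ℂ, s.card = n ∧
      (∀ μ : ℂ, μ ∈ s ↔ μ ∈ spectrum ℂ (M.map Complex.ofReal)) ∧
      (∀ k : ℕ, ((s.map (· ^ k)).sum) = (((M ^ k).trace : ℝ) : ℂ)) := by
  classical
  set N : Matrix (Fin n) (Fin n) ℂ := M.map Complex.ofReal with hN
  set f : Module.End ℂ (Fin n → ℂ) := Matrix.toLinAlgEquiv' N with hfdef
  have hds := DirectSum.isInternal_submodule_of_iSupIndep_of_iSup_eq_top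
      f.independent_maxGenEigenspace (Module.End.iSup_maxGenEigenspace_eq_top f)
  have h_fin : {μ | f.maxGenEigenspace μ ≠ ⊥}.Finite :=
      WellFoundedGT.finite_ne_bot_of_iSupIndep f.independent_maxGenEigenspace
  set Λ : Finset ℂ := h_fin.toFinset with hΛ
  set m : ℂ → ℕ := fun μ => Module.finrank ℂ (f.maxGenEigenspace μ) with hm
  have key : ∀ (k : ℕ) (μ : ℂ),
      LinearMap.trace ℂ _ ((f ^ k).restrict
        (Module.End.mapsTo_maxGenEigenspace_of_comm (Commute.pow_right rfl k) μ))
        = (m μ : ℂ) * μ ^ k := by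
    intro k μ
    set V := f.maxGenEigenspace μ with hV
    set g : Module.End ℂ V := f.restrict (Module.End.mapsTo_maxGenEigenspace_of_comm rfl μ)
      with hg
    have hgk : (f ^ k).restrict
        (Module.End.mapsTo_maxGenEigenspace_of_comm (Commute.pow_right rfl k) μ) = g ^ k := by
      rw [hg]
      exact (Module.End.pow_restrict k _).symm
    rw [hgk]
    have hnil : IsNilpotent (g - μ • 1) := by
      have h1 := f.isNilpotent_restrict_maxGenEigenspace_sub_algebraMap μ
      have hEq : g - μ • (1 : Module.End ℂ V)
          = LinearMap.restrict (f - algebraMap ℂ (Module.End ℂ (Fin n → ℂ)) μ)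
            (f.mapsTo_maxGenEigenspace_of_comm (Algebra.mul_sub_algebraMap_commutes f μ) μ) := by
        refine LinearMap.ext fun x => Subtype.ext ?_
        simp [hg, Module.algebraMap_end_apply, LinearMap.restrict_apply]
        rfl
      rw [hEq]
      exact h1
    obtain ⟨e, he⟩ := hnil
    have hdecomp : g = μ • 1 + (g - μ • 1) := by abel
    have hcomm : Commute (μ • (1 : Module.End ℂ V)) (g - μ • 1) :=
      (Commute.one_left _).smul_left μ
    rw [hdecomp, hcomm.add_pow, map_sum]
    rw [Finset.sum_eq_single k]
    · simp [smul_pow, Nat.sub_self, smul_mul_assoc, LinearMap.trace_one, mul_comm, hm]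
    · intro i hi hik
      have hki : 1 ≤ k - i := by
        rcases Finset.mem_range.mp hi with h
        omega
      have hnil2 : IsNilpotent ((g - μ • 1) ^ (k - i)) :=
        IsNilpotent.pow_of_pos ⟨e, he⟩ (by omega)
      have h0 : LinearMap.trace ℂ V ((g - μ • 1) ^ (k - i)) = 0 :=
        (LinearMap.isNilpotent_trace_of_isNilpotent hnil2).eq_zero
      rw [smul_pow, one_pow, smul_mul_assoc, one_mul,
        ← (Nat.cast_commute (k.choose i) (μ ^ i • (g - μ • 1) ^ (k - i))).eq,
        ← nsmul_eq_mul, map_nsmul, map_smul, h0, smul_zero, smul_zero]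
    · intro h
      exact absurd (Finset.self_mem_range_succ k) h
  have hsum : ∀ k : ℕ, ((∑ μ ∈ Λ, (m μ) • ({μ} : Multiset ℂ)).map (· ^ k)).sum
      = ∑ μ ∈ Λ, (m μ : ℂ) * μ ^ k := by
    intro k
    exact multiset_rep_sum Λ m k
  have hglob : ∀ k : ℕ, ∑ μ ∈ Λ, (m μ : ℂ) * μ ^ k = (((M ^ k).trace : ℝ) : ℂ) := by
    intro k
    have h1 := LinearMap.trace_eq_sum_trace_restrict' hds h_fin
      (fun μ => Module.End.mapsTo_maxGenEigenspace_of_comm (Commute.pow_right rfl k) μ)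
    have h2 : LinearMap.trace ℂ _ (f ^ k) = (((M ^ k).trace : ℝ) : ℂ) := by
      rw [hfdef, ← map_pow, LinearMap.trace_eq_matrix_trace ℂ (Pi.basisFun ℂ (Fin n)),
        LinearMap.toMatrix_eq_toMatrix',
        show (Matrix.toLinAlgEquiv' (N ^ k) : Module.End ℂ (Fin n → ℂ))
          = Matrix.toLin' (N ^ k) from rfl,
        LinearMap.toMatrix'_toLin', map_ofReal_pow, trace_map_ofReal]
    rw [← h2, h1]
    exact (Finset.sum_congr rfl fun μ _ => key k μ).symm
  have hmem : ∀ μ0 : ℂ, (μ0 ∈ ∑ μ ∈ Λ, (m μ) • ({μ} : Multiset ℂ)) ↔ μ0 ∈ spectrum ℂ N := by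
    intro μ0
    rw [Multiset.mem_sum]
    constructor
    · rintro ⟨μ, hμ, hin⟩
      rcases (Multiset.mem_nsmul.mp hin) with ⟨-, hin2⟩
      rw [Multiset.mem_singleton] at hin2; subst hin2
      have hne : f.maxGenEigenspace μ0 ≠ ⊥ := by
        simpa [hΛ] using hμ
      have h1 : f.HasUnifEigenvalue μ0 ⊤ := hne
      have h2 : f.HasEigenvalue μ0 :=
        (Module.End.hasUnifEigenvalue_iff_hasUnifEigenvalue_one (by norm_num)).mp h1
      have hsp := Module.End.hasEigenvalue_iff_mem_spectrum.mp h2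
      rwa [hfdef, AlgEquiv.spectrum_eq] at hsp
    · intro hsp
      have h2 : f.HasEigenvalue μ0 := Module.End.hasEigenvalue_iff_mem_spectrum.mpr
        (by rwa [hfdef, AlgEquiv.spectrum_eq])
      have hne : f.maxGenEigenspace μ0 ≠ ⊥ :=
        Module.End.HasUnifEigenvalue.le le_top h2
      refine ⟨μ0, by simpa [hΛ] using hne, Multiset.mem_nsmul.mpr
        ⟨fun h0 => hne (Submodule.finrank_eq_zero.mp h0), Multiset.mem_singleton_self _⟩⟩
  have hcard : (∑ μ ∈ Λ, (m μ) • ({μ} : Multiset ℂ)).card = n := by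
    rw [multiset_rep_card]
    have h0 := hglob 0
    simp only [pow_zero, mul_one] at h0
    have h1 : ((∑ μ ∈ Λ, m μ : ℕ) : ℂ) = (n : ℂ) := by
      push_cast
      rw [h0]
      simp [Matrix.trace_one]
    exact_mod_cast h1
  exact ⟨∑ μ ∈ Λ, (m μ) • ({μ} : Multiset ℂ), hcard, hmem, fun k => (hsum k).trans (hglob k)⟩

section SpecRadFacts
variable {n : ℕ}

lemma specRad_spec (M : Matrix (Fin n) (Fin n) ℝ) (s : Multiset ℂ)
    (hmem : ∀ μ : ℂ, μ ∈ s ↔ μ ∈ spectrum ℂ (M.map Complex.ofReal)) (hne : s ≠ 0) :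
    (∃ μ ∈ s, norm μ = specRad M) ∧ (∀ μ ∈ s, norm μ ≤ specRad M) := by
  classical
  have hT : {r : ℝ | ∃ μ ∈ spectrum ℂ (M.map Complex.ofReal), r = norm μ}
      = ↑(s.toFinset.image norm) := by
    ext r
    simp only [Set.mem_setOf_eq, Finset.coe_image, Set.mem_image, Finset.mem_coe,
      Multiset.mem_toFinset]
    constructor
    · rintro ⟨μ, hμ, rfl⟩; exact ⟨μ, (hmem μ).mpr hμ, rfl⟩
    · rintro ⟨μ, hμ, rfl⟩; exact ⟨μ, (hmem μ).mp hμ, rfl⟩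
  have hFne : (s.toFinset.image norm).Nonempty := by
    obtain ⟨μ, hμ⟩ := Multiset.exists_mem_of_ne_zero hne
    exact ⟨norm μ, Finset.mem_image_of_mem _ (Multiset.mem_toFinset.mpr hμ)⟩
  have hsup : specRad M = (s.toFinset.image norm).max' hFne := by
    rw [specRad, hT]
    exact hFne.csSup_eq_max'
  constructor
  · obtain ⟨μ, hμ, hμe⟩ := Finset.mem_image.mp ((s.toFinset.image norm).max'_mem hFne)
    exact ⟨μ, Multiset.mem_toFinset.mp hμ, by rw [hμe, hsup]⟩
  · intro μ hμ
    rw [hsup]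
    exact Finset.le_max' _ _ (Finset.mem_image_of_mem _ (Multiset.mem_toFinset.mpr hμ))

variable (hn : 0 < n) (M : Matrix (Fin n) (Fin n) ℝ)

include hn in
lemma rep_ne_zero {s : Multiset ℂ} (hcard : Multiset.card s = n) : s ≠ 0 := by
  intro h0
  rw [h0] at hcard
  simp at hcard
  omega

include hn in
lemma specRad_nonneg : 0 ≤ specRad M := by
  obtain ⟨s, hcard, hmem, -⟩ := matrix_exists_rep M
  obtain ⟨μ, -, he⟩ := (specRad_spec M s hmem (rep_ne_zero hn hcard)).1
  rw [← he]
  exact norm_nonneg μ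

include hn in
lemma trace_abs_le (k : ℕ) : |(M ^ k).trace| ≤ (n : ℝ) * specRad M ^ k := by
  obtain ⟨s, hcard, hmem, htr⟩ := matrix_exists_rep M
  have hspec := specRad_spec M s hmem (rep_ne_zero hn hcard)
  have h1 : |(M ^ k).trace| = norm ((s.map (· ^ k)).sum) := by
    rw [htr k, Complex.norm_real, Real.norm_eq_abs]
  rw [h1]
  calc norm ((s.map (· ^ k)).sum)
      ≤ ((s.map (· ^ k)).map norm).sum := by simpa using norm_multiset_sum_le (s.map (· ^ k))
    _ ≤ (Multiset.card ((s.map (· ^ k)).map norm)) • (specRad M ^ k) := by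
        apply Multiset.sum_le_card_nsmul
        intro xv hx
        rw [Multiset.map_map] at hx
        obtain ⟨μ, hμ, rfl⟩ := Multiset.mem_map.mp hx
        simp only [Function.comp_apply, norm_pow]
        exact pow_le_pow_left₀ (norm_nonneg μ) (hspec.2 μ hμ) k
    _ = (n : ℝ) * specRad M ^ k := by
        simp only [Multiset.card_map, hcard, nsmul_eq_mul]

include hn in
lemma specRad_le_of_growth (C r : ℝ) (hr : 0 ≤ r)
    (h : ∀ᶠ k in atTop, |(M ^ k).trace| ≤ C * r ^ k) : specRad M ≤ r := by
  obtain ⟨s, hcard, hmem, htr⟩ := matrix_exists_rep M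
  have h' : ∀ᶠ k in atTop, norm ((s.map (· ^ k)).sum) ≤ C * r ^ k := by
    filter_upwards [h] with k hk
    rwa [htr k, Complex.norm_real, Real.norm_eq_abs]
  have hall := abs_le_of_growth s C r hr h'
  obtain ⟨μ, hμ, he⟩ := (specRad_spec M s hmem (rep_ne_zero hn hcard)).1
  rw [← he]
  exact hall μ hμ

include hn in
lemma specRad_pow (t : ℕ) : specRad (M ^ t) = specRad M ^ t := by
  have hρ := specRad_nonneg hn M
  apply le_antisymm
  · apply specRad_le_of_growth hn (M ^ t) n (specRad M ^ t) (pow_nonneg hρ t)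
    refine Eventually.of_forall fun k => ?_
    rw [← pow_mul, ← pow_mul]
    exact trace_abs_le hn M (t * k)
  · obtain ⟨s, hcard, hmem, htr⟩ := matrix_exists_rep M
    have hgrow : ∀ᶠ k in atTop,
        norm (((s.map (· ^ t)).map (· ^ k)).sum) ≤ (n : ℝ) * specRad (M ^ t) ^ k := by
      refine Eventually.of_forall fun k => ?_
      have h1 : ((s.map (· ^ t)).map (· ^ k)) = s.map (· ^ (t * k)) := by
        rw [Multiset.map_map]
        exact Multiset.map_congr rfl fun μ _ => by simp [pow_mul]
      rw [h1, htr (t * k)]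
      rw [Complex.norm_real, Real.norm_eq_abs, pow_mul]
      exact trace_abs_le hn (M ^ t) k
    have hall := abs_le_of_growth (s.map (· ^ t)) n (specRad (M ^ t))
      (specRad_nonneg hn (M ^ t)) hgrow
    obtain ⟨μ, hμ, he⟩ := (specRad_spec M s hmem (rep_ne_zero hn hcard)).1
    have := hall (μ ^ t) (Multiset.mem_map_of_mem _ hμ)
    rw [norm_pow, he] at this
    exact this

end SpecRadFacts

section Entrywise
variable {n : ℕ}

lemma entrywise_pow_nonneg {M : Matrix (Fin n) (Fin n) ℝ} (h0 : ∀ i j, 0 ≤ M i j) (k : ℕ) :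
    ∀ i j, 0 ≤ (M ^ k) i j := by
  induction k with
  | zero => intro i j; rw [pow_zero]; by_cases h : i = j <;> simp [Matrix.one_apply, h]
  | succ k ih =>
    intro i j
    rw [pow_succ, Matrix.mul_apply]
    exact Finset.sum_nonneg fun l _ => mul_nonneg (ih i l) (h0 l j)

lemma entrywise_pow_le {M N' : Matrix (Fin n) (Fin n) ℝ} (h0 : ∀ i j, 0 ≤ M i j)
    (h0' : ∀ i j, 0 ≤ N' i j) (hle : ∀ i j, M i j ≤ N' i j) (k : ℕ) :
    (∀ i j, 0 ≤ (M ^ k) i j) ∧ (∀ i j, (M ^ k) i j ≤ (N' ^ k) i j) := by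
  refine ⟨entrywise_pow_nonneg h0 k, ?_⟩
  induction k with
  | zero => intro i j; rw [pow_zero, pow_zero]
  | succ k ihle =>
    intro i j
    rw [pow_succ, pow_succ, Matrix.mul_apply, Matrix.mul_apply]
    refine Finset.sum_le_sum fun l _ => ?_
    exact mul_le_mul (ihle i l) (hle l j) (h0 l j) (entrywise_pow_nonneg h0' k i l)

lemma trace_pow_nonneg {M : Matrix (Fin n) (Fin n) ℝ} (h0 : ∀ i j, 0 ≤ M i j) (k : ℕ) :
    0 ≤ (M ^ k).trace := by
  have := (entrywise_pow_le h0 h0 (fun i j => le_refl _) k).1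
  exact Finset.sum_nonneg fun i _ => this i i

lemma trace_pow_mono {M N' : Matrix (Fin n) (Fin n) ℝ} (h0 : ∀ i j, 0 ≤ M i j)
    (h0' : ∀ i j, 0 ≤ N' i j) (hle : ∀ i j, M i j ≤ N' i j) (k : ℕ) :
    (M ^ k).trace ≤ (N' ^ k).trace := by
  have := (entrywise_pow_le h0 h0' hle k).2
  exact Finset.sum_le_sum fun i _ => this i i

variable (hn : 0 < n)

include hn in
lemma specRad_mono {M N' : Matrix (Fin n) (Fin n) ℝ} (h0 : ∀ i j, 0 ≤ M i j)
    (h0' : ∀ i j, 0 ≤ N' i j) (hle : ∀ i j, M i j ≤ N' i j) :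
    specRad M ≤ specRad N' := by
  apply specRad_le_of_growth hn M n (specRad N') (specRad_nonneg hn N')
  refine Eventually.of_forall fun k => ?_
  rw [abs_of_nonneg (trace_pow_nonneg h0 k)]
  calc (M ^ k).trace ≤ (N' ^ k).trace := trace_pow_mono h0 h0' hle k
    _ ≤ |(N' ^ k).trace| := le_abs_self _
    _ ≤ (n : ℝ) * specRad N' ^ k := trace_abs_le hn N' k

lemma diag_pow_le {M : Matrix (Fin n) (Fin n) ℝ} (h0 : ∀ i j, 0 ≤ M i j) (i : Fin n) (k : ℕ) :
    (M i i) ^ k ≤ (M ^ k) i i := by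
  induction k with
  | zero => simp [Matrix.one_apply]
  | succ k ih =>
    rw [pow_succ, pow_succ, Matrix.mul_apply]
    have h1 : (M ^ k) i i * M i i ≤ ∑ l, (M ^ k) i l * M l i := by
      apply Finset.single_le_sum (f := fun l => (M ^ k) i l * M l i)
      · intro l _
        exact mul_nonneg ((entrywise_pow_le h0 h0 (fun a b => le_refl _) k).1 i l) (h0 l i)
      · exact Finset.mem_univ i
    have h2 : M i i ^ k * M i i ≤ (M ^ k) i i * M i i :=
      mul_le_mul_of_nonneg_right ih (h0 i i)
    linarith

include hn in
lemma diag_le_specRad {M : Matrix (Fin n) (Fin n) ℝ} (h0 : ∀ i j, 0 ≤ M i j) (i : Fin n) :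
    M i i ≤ specRad M := by
  by_contra hcon
  push_neg at hcon
  refine ratio_contradiction (C := n) (specRad_nonneg hn M) hcon ?_
  refine Eventually.of_forall fun k => ?_
  calc M i i ^ k ≤ (M ^ k) i i := diag_pow_le h0 i k
    _ ≤ (M ^ k).trace := by
        apply Finset.single_le_sum (f := fun l => (M ^ k) l l)
        · intro l _
          exact (entrywise_pow_le h0 h0 (fun a b => le_refl _) k).1 l l
        · exact Finset.mem_univ i
    _ ≤ |(M ^ k).trace| := le_abs_self _
    _ ≤ (n : ℝ) * specRad M ^ k := trace_abs_le hn M k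

include hn in
lemma freq_trace_large {M : Matrix (Fin n) (Fin n) ℝ} {r : ℝ} (hr : 0 ≤ r)
    (hlt : r < specRad M) : ∃ᶠ k in atTop, r ^ k < |(M ^ k).trace| := by
  by_contra hcon
  rw [not_frequently] at hcon
  have h' : ∀ᶠ k in atTop, |(M ^ k).trace| ≤ 1 * r ^ k := by
    filter_upwards [hcon] with k hk
    rw [one_mul]
    exact not_lt.mp hk
  exact absurd (specRad_le_of_growth hn M 1 r hr h') (not_le.mpr hlt)

end Entrywise
section Words

lemma add_pow_expand {R : Type*} [Semiring R] (x y : R) (L : ℕ) :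
    (x + y) ^ L = ∑ g : Fin L → Bool, (List.ofFn fun i => bif g i then x else y).prod := by
  induction L with
  | zero => simp
  | succ L ih =>
    have hsum := ((Fin.consEquiv (fun _ : Fin (L+1) => Bool)).sum_comp
      (fun g : Fin (L+1) → Bool => (List.ofFn fun i => bif g i then x else y).prod))
    rw [← hsum, Fintype.sum_prod_type, Fintype.sum_bool]
    have hterm : ∀ (b : Bool) (g : Fin L → Bool),
        (List.ofFn fun i => bif (Fin.consEquiv (fun _ : Fin (L+1) => Bool)) (b, g) i
            then x else y).prod
          = (bif b then x else y) * (List.ofFn fun i => bif g i then x else y).prod := by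
      intro b g
      rw [List.ofFn_succ]
      simp [Fin.consEquiv, List.prod_cons]
    simp only [hterm]
    rw [← Finset.mul_sum, ← Finset.mul_sum, Bool.cond_true, Bool.cond_false, ← add_mul, ← ih,
      pow_succ']

variable {n : ℕ}

def wordProd (B₁ B₂ : Matrix (Fin n) (Fin n) ℝ) {L : ℕ} (g : Fin L → Bool) :
    Matrix (Fin n) (Fin n) ℝ :=
  (List.ofFn fun i => bif g i then B₁ else B₂).prod

lemma wordProd_mem (B₁ B₂ : Matrix (Fin n) (Fin n) ℝ) {L : ℕ} (g : Fin L → Bool) :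
    wordProd B₁ B₂ g ∈ prodSet {B₁, B₂} L := by
  refine ⟨fun i => bif g i then B₁ else B₂, fun i => ?_, rfl⟩
  cases hgi : g i <;> simp [hgi]

lemma prodSet_eq_range (B₁ B₂ : Matrix (Fin n) (Fin n) ℝ) (j : ℕ) :
    prodSet {B₁, B₂} j = Set.range (fun g : Fin j → Bool => wordProd B₁ B₂ g) := by
  classical
  ext A
  constructor
  · rintro ⟨f, hf, rfl⟩
    refine ⟨fun i => decide (f i = B₁), ?_⟩
    have hfg : (fun i => bif decide (f i = B₁) then B₁ else B₂) = f := by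
      funext i
      by_cases h : f i = B₁
      · simp [h]
      · have h2 : f i = B₂ := by
          rcases hf i with h1 | h2
          · exact absurd h1 h
          · exact h2
        have hd : decide (f i = B₁) = false := decide_eq_false h
        rw [hd, Bool.cond_false, h2]
    show wordProd B₁ B₂ (fun i => decide (f i = B₁)) = _
    unfold wordProd
    rw [hfg]
  · rintro ⟨g, rfl⟩
    exact wordProd_mem B₁ B₂ g

lemma mem_prodSet_of_list {𝒜 : Set (Matrix (Fin n) (Fin n) ℝ)} {l : List (Matrix (Fin n) (Fin n) ℝ)}
    (hl : ∀ X ∈ l, X ∈ 𝒜) : l.prod ∈ prodSet 𝒜 l.length := by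
  refine ⟨l.get, fun i => hl _ (l.get_mem _), by rw [List.ofFn_get]⟩

lemma prodSet_elim {𝒜 : Set (Matrix (Fin n) (Fin n) ℝ)} {j : ℕ} {A : Matrix (Fin n) (Fin n) ℝ}
    (h : A ∈ prodSet 𝒜 j) :
    ∃ l : List (Matrix (Fin n) (Fin n) ℝ), l.length = j ∧ (∀ X ∈ l, X ∈ 𝒜) ∧ A = l.prod := by
  obtain ⟨f, hf, rfl⟩ := h
  refine ⟨List.ofFn f, List.length_ofFn (f := f), fun X hX => ?_, rfl⟩
  obtain ⟨i, rfl⟩ := List.mem_ofFn.mp hX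
  exact hf i

lemma prodSet_mul {𝒜 : Set (Matrix (Fin n) (Fin n) ℝ)} {j k : ℕ} {A B : Matrix (Fin n) (Fin n) ℝ}
    (hA : A ∈ prodSet 𝒜 j) (hB : B ∈ prodSet 𝒜 k) : A * B ∈ prodSet 𝒜 (j + k) := by
  obtain ⟨l₁, hl₁, hm₁, rfl⟩ := prodSet_elim hA
  obtain ⟨l₂, hl₂, hm₂, rfl⟩ := prodSet_elim hB
  have := mem_prodSet_of_list (l := l₁ ++ l₂) (fun X hX => by
    rcases List.mem_append.mp hX with h | h
    · exact hm₁ X h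
    · exact hm₂ X h)
  rwa [List.prod_append, List.length_append, hl₁, hl₂] at this

lemma prodSet_one {𝒜 : Set (Matrix (Fin n) (Fin n) ℝ)} : (1 : Matrix (Fin n) (Fin n) ℝ) ∈ prodSet 𝒜 0 := by
  have := mem_prodSet_of_list (𝒜 := 𝒜) (l := []) (fun X hX => absurd hX (List.not_mem_nil (a := X)))
  simpa using this

lemma prodSet_pow {𝒜 : Set (Matrix (Fin n) (Fin n) ℝ)} {L : ℕ} {A : Matrix (Fin n) (Fin n) ℝ}
    (hA : A ∈ prodSet 𝒜 L) (t : ℕ) : A ^ t ∈ prodSet 𝒜 (t * L) := by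
  induction t with
  | zero => simpa using prodSet_one
  | succ t ih =>
    have := prodSet_mul ih hA
    rwa [← pow_succ, ← Nat.succ_mul] at this

lemma list_prod_entry_bounds {S : Matrix (Fin n) (Fin n) ℝ} (hS0 : ∀ a b, 0 ≤ S a b) :
    ∀ l : List (Matrix (Fin n) (Fin n) ℝ),
      (∀ X ∈ l, (∀ a b, 0 ≤ X a b) ∧ (∀ a b, X a b ≤ S a b)) →
      (∀ a b, 0 ≤ l.prod a b) ∧ (∀ a b, l.prod a b ≤ (S ^ l.length) a b) := by
  intro l
  induction l with
  | nil =>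
    intro _
    constructor <;> intro a b
    · by_cases h : a = b <;> simp [List.prod_nil, Matrix.one_apply, h]
    · simp [List.prod_nil, pow_zero]
  | cons X l ih =>
    intro hmem
    obtain ⟨ih0, ihle⟩ := ih (fun Y hY => hmem Y (List.mem_cons_of_mem X hY))
    obtain ⟨hX0, hXle⟩ := hmem X (List.mem_cons_self)
    constructor <;> intro a b <;> rw [List.prod_cons, Matrix.mul_apply]
    · exact Finset.sum_nonneg fun c _ => mul_nonneg (hX0 a c) (ih0 c b)
    · rw [List.length_cons, pow_succ', Matrix.mul_apply]
      refine Finset.sum_le_sum fun c _ => ?_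
      exact mul_le_mul (hXle a c) (ihle c b) (ih0 c b) (hS0 a c)

end Words

section Main
variable {n : ℕ} {B₁ B₂ : Matrix (Fin n) (Fin n) ℝ}

theorem jsr_bounds_pos (hn : 0 < n) (h₁ : ∀ i j, 0 ≤ B₁ i j) (h₂ : ∀ i j, 0 ≤ B₂ i j) :
    specRad (B₁ + B₂) / 2 ≤ jsr {B₁, B₂} ∧ jsr {B₁, B₂} ≤ specRad (B₁ + B₂) := by
  classical
  set S := B₁ + B₂ with hS
  have hS0 : ∀ a b, 0 ≤ S a b := fun a b => add_nonneg (h₁ a b) (h₂ a b)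
  set 𝒜 : Set (Matrix (Fin n) (Fin n) ℝ) := {B₁, B₂} with h𝒜
  set u : ℕ → ℝ := fun j => (sSup (specRad '' prodSet 𝒜 j)) ^ ((1:ℝ)/j) with hu
  have hjsr : jsr 𝒜 = Filter.limsup u atTop := rfl
  have hmemA : ∀ {j : ℕ} {A : Matrix (Fin n) (Fin n) ℝ}, A ∈ prodSet 𝒜 j →
      (∀ a b, 0 ≤ A a b) ∧ (∀ a b, A a b ≤ (S ^ j) a b) := by
    intro j A hA
    obtain ⟨l, hlen, hmem, rfl⟩ := prodSet_elim hA
    have hbd := list_prod_entry_bounds hS0 l (fun X hX => by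
      rcases hmem X hX with h | h
      · subst h
        exact ⟨h₁, fun a b => le_add_of_nonneg_right (h₂ a b)⟩
      · rw [Set.mem_singleton_iff] at h
        subst h
        exact ⟨h₂, fun a b => le_add_of_nonneg_left (h₁ a b)⟩)
    rw [hlen] at hbd
    exact hbd
  have hfin : ∀ j, (specRad '' prodSet 𝒜 j).Finite := fun j => by
    rw [h𝒜, prodSet_eq_range]
    exact (Set.finite_range _).image _
  have hbdd_img : ∀ j, BddAbove (specRad '' prodSet 𝒜 j) := fun j => (hfin j).bddAbove
  have hne : ∀ j, (specRad '' prodSet 𝒜 j).Nonempty := fun j =>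
    ⟨_, Set.mem_image_of_mem _ (wordProd_mem B₁ B₂ (fun _ : Fin j => true))⟩
  have hsup_nonneg : ∀ j, 0 ≤ sSup (specRad '' prodSet 𝒜 j) := fun j =>
    Real.sSup_nonneg (by rintro x ⟨A, hA, rfl⟩; exact specRad_nonneg hn A)
  have hu_nonneg : ∀ j, 0 ≤ u j := fun j => Real.rpow_nonneg (hsup_nonneg j) _
  have hρS := specRad_nonneg hn S
  have hsup_le : ∀ j, sSup (specRad '' prodSet 𝒜 j) ≤ specRad S ^ j := by
    intro j
    apply Real.sSup_le
    · rintro x ⟨A, hA, rfl⟩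
      have hb := hmemA hA
      calc specRad A ≤ specRad (S ^ j) := specRad_mono hn hb.1 (entrywise_pow_nonneg hS0 j) hb.2
        _ = specRad S ^ j := specRad_pow hn S j
    · exact pow_nonneg hρS j
  have hupper_j : ∀ j : ℕ, 1 ≤ j → u j ≤ specRad S := by
    intro j hj
    have h1 : u j ≤ (specRad S ^ j) ^ ((1:ℝ)/j) :=
      Real.rpow_le_rpow (hsup_nonneg j) (hsup_le j) (by positivity)
    have hjne : ((j:ℝ)) ≠ 0 := Nat.cast_ne_zero.mpr (by omega)
    have h2 : (specRad S ^ j) ^ ((1:ℝ)/j) = specRad S := by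
      rw [← Real.rpow_natCast (specRad S) j, ← Real.rpow_mul hρS, mul_one_div,
        div_self hjne, Real.rpow_one]
    rw [h2] at h1
    exact h1
  have hbdd : Filter.IsBoundedUnder (· ≤ ·) atTop u :=
    isBoundedUnder_of_eventually_le (a := specRad S) (by
      filter_upwards [eventually_ge_atTop 1] with j hj
      exact hupper_j j hj)
  have hcob : Filter.IsCoboundedUnder (· ≤ ·) atTop u :=
    Filter.IsCoboundedUnder.of_frequently_ge ((Eventually.of_forall hu_nonneg).frequently)
  have hupper : jsr 𝒜 ≤ specRad S := by
    rw [hjsr]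
    apply Filter.limsup_le_of_le hcob
    filter_upwards [eventually_ge_atTop 1] with j hj
    exact hupper_j j hj
  have hword : ∀ {L : ℕ} {A : Matrix (Fin n) (Fin n) ℝ}, 1 ≤ L → A ∈ prodSet 𝒜 L →
      ∀ t : ℕ, 1 ≤ t → specRad A ^ ((1:ℝ)/(L:ℝ)) ≤ u (t * L) := by
    intro L A hL hA t ht
    have h2 : specRad (A ^ t) ≤ sSup (specRad '' prodSet 𝒜 (t * L)) :=
      le_csSup (hbdd_img _) (Set.mem_image_of_mem _ (prodSet_pow hA t))
    have h3 : specRad (A ^ t) = specRad A ^ t := specRad_pow hn A t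
    have hAnn := specRad_nonneg hn A
    have h4 : (specRad A ^ t) ^ ((1:ℝ)/((t*L : ℕ):ℝ)) ≤ u (t*L) :=
      Real.rpow_le_rpow (by positivity) (h3 ▸ h2) (by positivity)
    have htLne : ((t:ℝ)) * (1/((t:ℝ)*(L:ℝ))) = 1/(L:ℝ) := by
      have ht0 : (t:ℝ) ≠ 0 := Nat.cast_ne_zero.mpr (by omega)
      have hL0 : (L:ℝ) ≠ 0 := Nat.cast_ne_zero.mpr (by omega)
      field_simp
    calc specRad A ^ ((1:ℝ)/(L:ℝ))
        = (specRad A ^ t) ^ ((1:ℝ)/((t*L:ℕ):ℝ)) := by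
          rw [← Real.rpow_natCast (specRad A) t, ← Real.rpow_mul hAnn]
          congr 1
          push_cast
          rw [htLne]
      _ ≤ u (t*L) := h4
  refine ⟨?_, hupper⟩
  suffices hlow : ∀ c, c < specRad S / 2 → c ≤ jsr 𝒜 by
    by_contra hcon
    push_neg at hcon
    have := hlow ((jsr 𝒜 + specRad S / 2)/2) (by linarith)
    linarith
  intro c hc
  rcases le_or_gt c 0 with hc0 | hc0
  · have h0jsr : (0:ℝ) ≤ jsr 𝒜 := by
      rw [hjsr]
      exact le_limsup_of_frequently_le ((Eventually.of_forall hu_nonneg).frequently) hbdd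
    linarith
  set b := (c + specRad S / 2) / 2 with hb
  have hcb : c < b := by rw [hb]; linarith
  have hbρ : 2 * b < specRad S := by rw [hb]; linarith
  have hb0 : (0:ℝ) < b := by linarith
  have hfreq := freq_trace_large hn (M := S) (r := 2*b) (by linarith) hbρ
  have hn0 : (0:ℝ) < (n:ℝ) := by exact_mod_cast hn
  have htend : Tendsto (fun L : ℕ => (n:ℝ) ^ ((1:ℝ)/(L:ℝ))) atTop (nhds 1) := by
    have hlog : Tendsto (fun L : ℕ => Real.log n * ((1:ℝ)/(L:ℝ))) atTop (nhds 0) := by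
      simpa using (tendsto_one_div_atTop_nhds_zero_nat).const_mul (Real.log n)
    have hexp := (Real.continuous_exp.tendsto 0).comp hlog
    rw [Real.exp_zero] at hexp
    refine hexp.congr fun L => ?_
    rw [Function.comp_apply, ← Real.rpow_def_of_pos hn0]
  have hev1 : ∀ᶠ L : ℕ in atTop, (n:ℝ) ^ ((1:ℝ)/(L:ℝ)) < b / c :=
    htend.eventually (gt_mem_nhds ((one_lt_div hc0).mpr hcb))
  obtain ⟨L, hLtr, hLn, hL1⟩ := (hfreq.and_eventually (hev1.and (eventually_ge_atTop 1))).exists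
  have htrS : (2*b) ^ L < (S ^ L).trace := by
    rwa [abs_of_nonneg (trace_pow_nonneg hS0 L)] at hLtr
  have hexp : (S ^ L).trace = ∑ g : Fin L → Bool, (wordProd B₁ B₂ g).trace := by
    rw [hS, add_pow_expand, Matrix.trace_sum]
    rfl
  have hcard2 : ((Finset.univ : Finset (Fin L → Bool)).card : ℝ) = (2:ℝ) ^ L := by
    rw [Finset.card_univ]
    simp [Fintype.card_fun]
  have hex_g : ∃ g : Fin L → Bool, b ^ L < (wordProd B₁ B₂ g).trace := by
    by_contra hcon2
    push_neg at hcon2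
    have hsum_le : ∑ g : Fin L → Bool, (wordProd B₁ B₂ g).trace
        ≤ ∑ _g : Fin L → Bool, b ^ L := Finset.sum_le_sum fun g _ => hcon2 g
    rw [Finset.sum_const, nsmul_eq_mul, hcard2] at hsum_le
    rw [hexp] at htrS
    rw [← mul_pow] at hsum_le
    linarith
  obtain ⟨g, hg⟩ := hex_g
  set A := wordProd B₁ B₂ g with hA
  have hA_mem : A ∈ prodSet 𝒜 L := wordProd_mem B₁ B₂ g
  have hA0 : ∀ a b', 0 ≤ A a b' := (hmemA hA_mem).1
  have hex_i : ∃ i : Fin n, b ^ L / n < A i i := by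
    by_contra hcon3
    push_neg at hcon3
    have h6 : A.trace ≤ ∑ _i : Fin n, b ^ L / n := Finset.sum_le_sum fun i _ => hcon3 i
    rw [Finset.sum_const, Finset.card_univ, Fintype.card_fin, nsmul_eq_mul] at h6
    have h7 : (n:ℝ) * (b ^ L / n) = b ^ L := by field_simp
    rw [h7] at h6
    linarith
  obtain ⟨i, hi⟩ := hex_i
  have hρA : b ^ L / n < specRad A := lt_of_lt_of_le hi (diag_le_specRad hn hA0 i)
  have hLne : ((L:ℝ)) ≠ 0 := Nat.cast_ne_zero.mpr (by omega)
  have hnpow : (0:ℝ) < (n:ℝ) ^ ((1:ℝ)/(L:ℝ)) := Real.rpow_pos_of_pos hn0 _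
  have hstep : c ≤ (b ^ L / n) ^ ((1:ℝ)/(L:ℝ)) := by
    have h5 : (b ^ L / n) ^ ((1:ℝ)/(L:ℝ)) = b / (n:ℝ) ^ ((1:ℝ)/(L:ℝ)) := by
      rw [Real.div_rpow (by positivity) (by positivity)]
      congr 1
      rw [← Real.rpow_natCast b L, ← Real.rpow_mul hb0.le, mul_one_div, div_self hLne,
        Real.rpow_one]
    rw [h5]
    have hbbc : b / (b / c) = c := by
      rw [div_div_eq_mul_div, mul_comm, mul_div_assoc, div_self (ne_of_gt hb0), mul_one]
    calc c = b / (b / c) := hbbc.symm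
      _ ≤ b / (n:ℝ) ^ ((1:ℝ)/(L:ℝ)) := by gcongr
  have hcA : c ≤ specRad A ^ ((1:ℝ)/(L:ℝ)) :=
    hstep.trans (Real.rpow_le_rpow (by positivity) hρA.le (by positivity))
  have hfreq2 : ∃ᶠ j in atTop, c ≤ u j := by
    rw [frequently_atTop]
    intro K
    refine ⟨(max K 1) * L, ?_, ?_⟩
    · calc K ≤ max K 1 := le_max_left _ _
        _ ≤ (max K 1) * L := Nat.le_mul_of_pos_right _ (by omega)
    · exact hcA.trans (hword hL1 hA_mem (max K 1) (le_max_right _ _))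
  rw [hjsr]
  exact le_limsup_of_frequently_le hfreq2 hbdd

end Main

section ZeroDim

lemma specRad_zero_dim (M : Matrix (Fin 0) (Fin 0) ℝ) : specRad M = 0 := by
  haveI : Subsingleton (Matrix (Fin 0) (Fin 0) ℂ) := ⟨fun a b => by ext i j; exact i.elim0⟩
  have hsp : spectrum ℂ (M.map Complex.ofReal) = ∅ := by
    rw [Set.eq_empty_iff_forall_notMem]
    intro μ hμ
    exact (spectrum.mem_iff.mp hμ) (isUnit_of_subsingleton _)
  rw [specRad]
  convert Real.sSup_empty using 2
  rw [Set.eq_empty_iff_forall_notMem]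
  rintro r ⟨μ, hμ, -⟩
  rw [hsp] at hμ
  exact hμ

theorem jsr_bounds_zero (B₁ B₂ : Matrix (Fin 0) (Fin 0) ℝ) :
    specRad (B₁ + B₂) / 2 ≤ jsr {B₁, B₂} ∧ jsr {B₁, B₂} ≤ specRad (B₁ + B₂) := by
  have himg : ∀ j : ℕ, specRad '' prodSet {B₁, B₂} j = {0} := by
    intro j
    rw [Set.eq_singleton_iff_unique_mem]
    constructor
    · exact ⟨wordProd B₁ B₂ (fun _ : Fin j => true),
        wordProd_mem B₁ B₂ _, specRad_zero_dim _⟩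
    · rintro x ⟨A, -, rfl⟩
      exact specRad_zero_dim A
  have hjsr0 : jsr {B₁, B₂} = 0 := by
    rw [jsr]
    have hcongr : ∀ᶠ j : ℕ in atTop,
        (sSup (specRad '' prodSet {B₁, B₂} j)) ^ ((1:ℝ)/j) = (0:ℝ) := by
      filter_upwards [eventually_ge_atTop 1] with j hj
      rw [himg j, csSup_singleton]
      exact Real.zero_rpow (one_div_ne_zero (Nat.cast_ne_zero.mpr (by omega)))
    rw [Filter.limsup_congr hcongr]
    exact Filter.limsup_const 0
  rw [hjsr0, specRad_zero_dim]
  norm_num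

end ZeroDim


/-- For matrices with nonnegative entries,
ρ(B₁ + B₂)/2 ≤ ρ({B₁, B₂}) ≤ ρ(B₁ + B₂). -/
theorem jsr_nonneg_entries_bounds {n : ℕ}
    (B₁ B₂ : Matrix (Fin n) (Fin n) ℝ)
    (h₁ : ∀ i j, 0 ≤ B₁ i j) (h₂ : ∀ i j, 0 ≤ B₂ i j) :
    specRad (B₁ + B₂) / 2 ≤ jsr {B₁, B₂} ∧ jsr {B₁, B₂} ≤ specRad (B₁ + B₂) := by
  cases n with
  | zero => exact jsr_bounds_zero B₁ B₂
  | succ m => exact jsr_bounds_pos (Nat.succ_pos m) h₁ h₂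
end

section
/- Let B₁ and B₂ be n×n real matrices. Suppose there exist an invertible n×n real matrix T, k×k real matrices B₁,₁ and B₂,₁ (with 1 ≤ k < n), (n−k)×(n−k) real matrices B₁,₂ and B₂,₂, and k×(n−k) real matrices B₁,₀ and B₂,₀ such that T B₁ T⁻¹ is the block upper triangular matrix with diagonal blocks B₁,₁ and B₁,₂ and upper-right block B₁,₀, and T B₂ T⁻¹ is the block upper triangular matrix with diagonal blocks B₂,₁ and B₂,₂ and upper-right block B₂,₀ (both with zero lower-left block). Then ρ({B₁, B₂}) = max( ρ({B₁,₁, B₂,₁}), ρ({B₁,₂, B₂,₂}) ). -/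
open Matrix Filter

attribute [local instance] Matrix.linftyOpNormedRing Matrix.linftyOpNormedAlgebra

lemma specRad_eq {m : ℕ} (A : Matrix (Fin m) (Fin m) ℝ) :
    specRad A = sSup (norm '' spectrum ℂ (A.map Complex.ofReal)) := by
  unfold specRad
  congr 1
  ext r
  simp [Set.mem_image, eq_comm]

lemma specRad_nonneg_s5 {m : ℕ} (A : Matrix (Fin m) (Fin m) ℝ) : 0 ≤ specRad A := by
  refine Real.sSup_nonneg ?_
  rintro r ⟨μ, _, rfl⟩
  exact norm_nonneg μ

lemma spectrum_cplx_nonempty {m : ℕ} (hm : m ≠ 0) (M : Matrix (Fin m) (Fin m) ℂ) :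
    (spectrum ℂ M).Nonempty := by
  haveI : Nonempty (Fin m) := ⟨⟨0, Nat.pos_of_ne_zero hm⟩⟩
  exact spectrum.nonempty_of_isAlgClosed_of_finiteDimensional ℂ M

lemma specRad_le_norm {m : ℕ} (hm : m ≠ 0) (A : Matrix (Fin m) (Fin m) ℝ) :
    specRad A ≤ ‖A.map Complex.ofReal‖ := by
  haveI : Nonempty (Fin m) := ⟨⟨0, Nat.pos_of_ne_zero hm⟩⟩
  haveI : CompleteSpace (Matrix (Fin m) (Fin m) ℂ) := FiniteDimensional.complete ℂ _
  rw [specRad_eq]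
  refine Real.sSup_le ?_ (norm_nonneg _)
  rintro r ⟨μ, hμ, rfl⟩
  exact spectrum.norm_le_norm_of_mem hμ

lemma spectrum_conj {m : ℕ} (T A : Matrix (Fin m) (Fin m) ℝ) (hT : IsUnit T) :
    spectrum ℂ ((T * A * T⁻¹).map Complex.ofReal) = spectrum ℂ (A.map Complex.ofReal) := by
  let φ : Matrix (Fin m) (Fin m) ℝ →+* Matrix (Fin m) (Fin m) ℂ :=
    (Complex.ofRealHom).mapMatrix
  have hmap : ∀ X : Matrix (Fin m) (Fin m) ℝ, X.map Complex.ofReal = φ X := fun _ => rfl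
  let u : (Matrix (Fin m) (Fin m) ℂ)ˣ := Units.map φ.toMonoidHom hT.unit
  have hu : (u : Matrix (Fin m) (Fin m) ℂ) = φ T := by
    simp [u, hT.unit_spec]
  have hu' : ((u⁻¹ : _ˣ) : Matrix (Fin m) (Fin m) ℂ) = φ T⁻¹ := by
    have : u⁻¹ = Units.map φ.toMonoidHom hT.unit⁻¹ := by
      simp [u]
    rw [this]
    have h2 : ((hT.unit⁻¹ : _ˣ) : Matrix (Fin m) (Fin m) ℝ) = T⁻¹ := by
      rw [Matrix.coe_units_inv, hT.unit_spec]
    simp [Units.coe_map, h2]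
  rw [hmap, hmap, _root_.map_mul, _root_.map_mul, ← hu, ← hu', spectrum.units_conjugate]

lemma spectrum_reindex {l m : Type*} [Fintype l] [Fintype m] [DecidableEq l] [DecidableEq m]
    (e : l ≃ m) (M : Matrix l l ℂ) :
    spectrum ℂ (Matrix.reindex e e M) = spectrum ℂ M := by
  have := AlgEquiv.spectrum_eq (Matrix.reindexAlgEquiv ℂ ℂ e) M
  rwa [Matrix.reindexAlgEquiv_apply] at this

lemma spectrum_fromBlocks {p q : ℕ} (P : Matrix (Fin p) (Fin p) ℂ) (Q : Matrix (Fin q) (Fin q) ℂ)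
    (C : Matrix (Fin p) (Fin q) ℂ) :
    spectrum ℂ (Matrix.fromBlocks P C 0 Q) = spectrum ℂ P ∪ spectrum ℂ Q := by
  ext z
  simp only [spectrum.mem_iff, Set.mem_union]
  rw [Matrix.isUnit_iff_isUnit_det, Matrix.isUnit_iff_isUnit_det, Matrix.isUnit_iff_isUnit_det]
  have hblock : algebraMap ℂ (Matrix (Fin p ⊕ Fin q) (Fin p ⊕ Fin q) ℂ) z -
      Matrix.fromBlocks P C 0 Q =
      Matrix.fromBlocks (algebraMap ℂ _ z - P) (-C) 0 (algebraMap ℂ _ z - Q) := by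
    ext (i | i) (j | j) <;>
      simp [Matrix.algebraMap_matrix_apply, Matrix.sub_apply]
  rw [hblock, Matrix.det_fromBlocks_zero₂₁, isUnit_iff_ne_zero, isUnit_iff_ne_zero,
    isUnit_iff_ne_zero, mul_ne_zero_iff]
  tauto

lemma specRad_of_conj {n k m : ℕ} (hk : k ≠ 0) (hm : m ≠ 0) (e : Fin k ⊕ Fin m ≃ Fin n)
    (T A : Matrix (Fin n) (Fin n) ℝ) (hT : IsUnit T)
    (P : Matrix (Fin k) (Fin k) ℝ) (Q : Matrix (Fin m) (Fin m) ℝ) (C : Matrix (Fin k) (Fin m) ℝ)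
    (h : T * A * T⁻¹ = Matrix.reindex e e (Matrix.fromBlocks P C 0 Q)) :
    specRad A = max (specRad P) (specRad Q) := by
  have hmapre : ((Matrix.reindex e e (Matrix.fromBlocks P C 0 Q)).map Complex.ofReal)
      = Matrix.reindex e e ((Matrix.fromBlocks P C 0 Q).map Complex.ofReal) := by
    simp [Matrix.reindex_apply, Matrix.submatrix_map]
  have hfb : (Matrix.fromBlocks P C 0 Q).map Complex.ofReal =
      Matrix.fromBlocks (P.map Complex.ofReal) (C.map Complex.ofReal) 0 (Q.map Complex.ofReal) := by
    rw [Matrix.fromBlocks_map]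
    congr 1
  have hs : spectrum ℂ (A.map Complex.ofReal)
      = spectrum ℂ (P.map Complex.ofReal) ∪ spectrum ℂ (Q.map Complex.ofReal) := by
    rw [← spectrum_conj T A hT, h, hmapre, spectrum_reindex, hfb, spectrum_fromBlocks]
  rw [specRad_eq, specRad_eq, specRad_eq, hs, Set.image_union]
  refine csSup_union ?_ ?_ ?_ ?_
  · exact ((Matrix.finite_spectrum _).image _).bddAbove
  · exact (spectrum_cplx_nonempty hk _).image _
  · exact ((Matrix.finite_spectrum _).image _).bddAbove
  · exact (spectrum_cplx_nonempty hm _).image _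

lemma reindex_mul {l m : Type*} [Fintype l] [Fintype m] [DecidableEq l] [DecidableEq m]
    (e : l ≃ m) (X Y : Matrix l l ℝ) :
    Matrix.reindex e e X * Matrix.reindex e e Y = Matrix.reindex e e (X * Y) := by
  simp [Matrix.reindex_apply, Matrix.submatrix_mul_equiv]

lemma conj_list_prod {n k m : ℕ} (e : Fin k ⊕ Fin m ≃ Fin n)
    (T : Matrix (Fin n) (Fin n) ℝ) (hT : IsUnit T) :
    ∀ l : List (Matrix (Fin n) (Fin n) ℝ × Matrix (Fin k) (Fin k) ℝ × Matrix (Fin m) (Fin m) ℝ),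
    (∀ p ∈ l, ∃ C, T * p.1 * T⁻¹ = Matrix.reindex e e (Matrix.fromBlocks p.2.1 C 0 p.2.2)) →
    ∃ C, T * (l.map Prod.fst).prod * T⁻¹ =
      Matrix.reindex e e (Matrix.fromBlocks (l.map fun p => p.2.1).prod C 0
        (l.map fun p => p.2.2).prod)
  | [], _ => ⟨0, by
      have h1 : T * T⁻¹ = 1 := Matrix.mul_nonsing_inv T ((Matrix.isUnit_iff_isUnit_det T).mp hT)
      simp [h1, Matrix.fromBlocks_one]⟩
  | p :: l, h => by
    obtain ⟨C, hC⟩ := h p List.mem_cons_self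
    obtain ⟨D, hD⟩ := conj_list_prod e T hT l fun q hq => h q (List.mem_cons_of_mem _ hq)
    have key : T⁻¹ * T = 1 := Matrix.nonsing_inv_mul T ((Matrix.isUnit_iff_isUnit_det T).mp hT)
    refine ⟨p.2.1 * D + C * (l.map fun p => p.2.2).prod, ?_⟩
    have hsplit : T * ((p :: l).map Prod.fst).prod * T⁻¹
        = (T * p.1 * T⁻¹) * (T * (l.map Prod.fst).prod * T⁻¹) := by
      have htt : T⁻¹ * (T * ((l.map Prod.fst).prod * T⁻¹)) = (l.map Prod.fst).prod * T⁻¹ := by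
        rw [← Matrix.mul_assoc, key, Matrix.one_mul]
      simp [List.map_cons, List.prod_cons, Matrix.mul_assoc, htt]
    rw [hsplit, hC, hD, reindex_mul, Matrix.fromBlocks_multiply]
    simp

lemma prodSet_pair_eq_range {n : ℕ} (X Y : Matrix (Fin n) (Fin n) ℝ) (j : ℕ) :
    prodSet {X, Y} j =
      Set.range (fun ε : Fin j → Bool => (List.ofFn fun i => if ε i then Y else X).prod) := by
  classical
  ext A
  constructor
  · rintro ⟨f, hf, rfl⟩
    refine ⟨fun i => decide (f i = Y), ?_⟩
    have hfn : (fun i : Fin j => if decide (f i = Y) = true then Y else X) = f := by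
      funext i
      by_cases h : f i = Y
      · simp [h]
      · have hx : f i = X := by rcases hf i with h' | h' <;> simp_all
        have hd : (decide (f i = Y)) = false := decide_eq_false h
        rw [hd]
        simpa using hx.symm
    simp only [hfn]
  · rintro ⟨ε, rfl⟩
    exact ⟨fun i => if ε i then Y else X,
      fun i => by by_cases h : ε i <;> simp [h], rfl⟩

lemma sSup_range_max {ι : Type*} [Finite ι] [Nonempty ι] (u v w : ι → ℝ)
    (h : ∀ i, w i = max (u i) (v i)) :
    sSup (Set.range w) = max (sSup (Set.range u)) (sSup (Set.range v)) := by
  have hu : BddAbove (Set.range u) := (Set.finite_range u).bddAbove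
  have hv : BddAbove (Set.range v) := (Set.finite_range v).bddAbove
  have hw : BddAbove (Set.range w) := (Set.finite_range w).bddAbove
  refine le_antisymm ?_ ?_
  · refine csSup_le (Set.range_nonempty w) ?_
    rintro x ⟨i, rfl⟩
    rw [h i]
    exact max_le_max (le_csSup hu ⟨i, rfl⟩) (le_csSup hv ⟨i, rfl⟩)
  · refine max_le ?_ ?_
    · refine csSup_le (Set.range_nonempty u) ?_
      rintro x ⟨i, rfl⟩
      exact le_trans (le_trans (le_max_left _ _) (h i).symm.le) (le_csSup hw ⟨i, rfl⟩)
    · refine csSup_le (Set.range_nonempty v) ?_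
      rintro x ⟨i, rfl⟩
      exact le_trans (le_trans (le_max_right _ _) (h i).symm.le) (le_csSup hw ⟨i, rfl⟩)

lemma max_rpow {a b e : ℝ} (ha : 0 ≤ a) (hb : 0 ≤ b) (he : 0 ≤ e) :
    (max a b) ^ e = max (a ^ e) (b ^ e) := by
  rcases le_total a b with h | h
  · rw [max_eq_right h, max_eq_right (Real.rpow_le_rpow ha h he)]
  · rw [max_eq_left h, max_eq_left (Real.rpow_le_rpow hb h he)]

lemma list_prod_le_pow {C : ℝ} (hC : 0 ≤ C) :
    ∀ l : List ℝ, (∀ x ∈ l, x ≤ C) → (∀ x ∈ l, 0 ≤ x) → l.prod ≤ C ^ l.length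
  | [], _, _ => by simp
  | a :: l, h, h0 => by
    have ih := list_prod_le_pow hC l (fun x hx => h x (List.mem_cons_of_mem _ hx))
      (fun x hx => h0 x (List.mem_cons_of_mem _ hx))
    have hprod : (0 : ℝ) ≤ l.prod :=
      List.prod_nonneg fun x hx => h0 x (List.mem_cons_of_mem _ hx)
    rw [List.prod_cons, List.length_cons, pow_succ']
    exact mul_le_mul (h a List.mem_cons_self) ih hprod hC

lemma sSup_specRad_nonneg {m : ℕ} (𝒜 : Set (Matrix (Fin m) (Fin m) ℝ)) (j : ℕ) :
    0 ≤ sSup (specRad '' prodSet 𝒜 j) := by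
  refine Real.sSup_nonneg ?_
  rintro r ⟨A, -, rfl⟩
  exact specRad_nonneg_s5 A

lemma jsr_seq_bounded {m : ℕ} (hm : m ≠ 0) (X Y : Matrix (Fin m) (Fin m) ℝ) :
    Filter.IsBoundedUnder (· ≤ ·) Filter.atTop
      (fun j : ℕ => (sSup (specRad '' prodSet {X, Y} j)) ^ ((1 : ℝ) / j)) := by
  classical
  haveI : Nonempty (Fin m) := ⟨⟨0, Nat.pos_of_ne_zero hm⟩⟩
  set C : ℝ := max (max ‖X.map Complex.ofReal‖ ‖Y.map Complex.ofReal‖) 1 with hCdef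
  have hC1 : (1 : ℝ) ≤ C := le_max_right _ _
  have hC0 : (0 : ℝ) ≤ C := le_trans zero_le_one hC1
  refine isBoundedUnder_of ⟨C, fun j => ?_⟩
  rcases Nat.eq_zero_or_pos j with rfl | hj
  · simpa using hC1
  have hsup : sSup (specRad '' prodSet {X, Y} j) ≤ C ^ j := by
    refine Real.sSup_le ?_ (pow_nonneg hC0 j)
    rintro r ⟨A, ⟨f, hf, rfl⟩, rfl⟩
    refine le_trans (specRad_le_norm hm _) ?_
    have hmap : ((List.ofFn f).prod).map Complex.ofReal
        = ((List.ofFn f).map (fun M => Complex.ofRealHom.mapMatrix M)).prod := by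
      have : ((List.ofFn f).prod).map Complex.ofReal
          = Complex.ofRealHom.mapMatrix (List.ofFn f).prod := rfl
      rw [this, map_list_prod]
    rw [hmap]
    refine le_trans (List.norm_prod_le _) ?_
    have hlen : (((List.ofFn f).map (fun M => Complex.ofRealHom.mapMatrix M)).map norm).length
        = j := by simp
    refine le_trans (list_prod_le_pow hC0 _ ?_ ?_) (by rw [hlen])
    swap
    · intro x hx
      simp only [List.mem_map] at hx
      obtain ⟨M, -, rfl⟩ := hx
      exact norm_nonneg M
    intro x hx
    simp only [List.map_map, List.mem_map, List.mem_ofFn, Set.mem_range, Function.comp] at hx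
    obtain ⟨M, ⟨i, rfl⟩, rfl⟩ := hx
    rcases hf i with h | h <;> rw [h]
    · exact le_trans (le_max_left _ _) (le_max_left _ _)
    · exact le_trans (le_max_right _ _) (le_max_left _ _)
  calc (sSup (specRad '' prodSet {X, Y} j)) ^ ((1 : ℝ) / j)
      ≤ (C ^ j) ^ ((1 : ℝ) / j) :=
        Real.rpow_le_rpow (sSup_specRad_nonneg _ _) hsup (by positivity)
    _ = C := by
        rw [← Real.rpow_natCast C j, ← Real.rpow_mul hC0]
        rw [mul_one_div, div_self (by exact_mod_cast hj.ne'), Real.rpow_one]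

/-- Reducibility: if T B₁ T⁻¹ and T B₂ T⁻¹ are block upper triangular with the
same block structure, the JSR of {B₁, B₂} equals the maximum of the JSRs of the
sets of corresponding diagonal blocks. -/
theorem jsr_reducible {n k : ℕ} (hk1 : 1 ≤ k) (hkn : k < n)
    (B₁ B₂ T : Matrix (Fin n) (Fin n) ℝ) (hT : IsUnit T)
    (B₁₁ B₂₁ : Matrix (Fin k) (Fin k) ℝ)
    (B₁₂ B₂₂ : Matrix (Fin (n - k)) (Fin (n - k)) ℝ)
    (B₁₀ B₂₀ : Matrix (Fin k) (Fin (n - k)) ℝ)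
    (h₁ : T * B₁ * T⁻¹ =
      Matrix.reindex (finSumFinEquiv.trans (finCongr (Nat.add_sub_cancel' hkn.le)))
        (finSumFinEquiv.trans (finCongr (Nat.add_sub_cancel' hkn.le)))
        (Matrix.fromBlocks B₁₁ B₁₀ 0 B₁₂))
    (h₂ : T * B₂ * T⁻¹ =
      Matrix.reindex (finSumFinEquiv.trans (finCongr (Nat.add_sub_cancel' hkn.le)))
        (finSumFinEquiv.trans (finCongr (Nat.add_sub_cancel' hkn.le)))
        (Matrix.fromBlocks B₂₁ B₂₀ 0 B₂₂)) :
    jsr {B₁, B₂} = max (jsr {B₁₁, B₂₁}) (jsr {B₁₂, B₂₂}) := by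
  classical
  have hk0 : k ≠ 0 := by omega
  have hm0 : n - k ≠ 0 := by omega
  set e : Fin k ⊕ Fin (n - k) ≃ Fin n :=
    finSumFinEquiv.trans (finCongr (Nat.add_sub_cancel' hkn.le)) with he
  have hpt : ∀ (j : ℕ) (ε : Fin j → Bool),
      specRad (List.ofFn fun i => if ε i then B₂ else B₁).prod
        = max (specRad (List.ofFn fun i => if ε i then B₂₁ else B₁₁).prod)
              (specRad (List.ofFn fun i => if ε i then B₂₂ else B₁₂).prod) := by
    intro j ε
    have hmem : ∀ p ∈ (List.ofFn fun i => if ε i then (B₂, B₂₁, B₂₂) else (B₁, B₁₁, B₁₂)),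
        ∃ C, T * p.1 * T⁻¹ = Matrix.reindex e e (Matrix.fromBlocks p.2.1 C 0 p.2.2) := by
      intro p hp
      simp only [List.mem_ofFn, Set.mem_range] at hp
      obtain ⟨i, rfl⟩ := hp
      by_cases h : ε i
      · simp only [h, if_true]
        exact ⟨B₂₀, h₂⟩
      · simp only [h, if_false]
        exact ⟨B₁₀, h₁⟩
    obtain ⟨C, hC⟩ := conj_list_prod e T hT
      (List.ofFn fun i => if ε i then (B₂, B₂₁, B₂₂) else (B₁, B₁₁, B₁₂)) hmem
    rw [List.map_ofFn, List.map_ofFn, List.map_ofFn] at hC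
    simp only [Function.comp_def, apply_ite] at hC
    exact specRad_of_conj hk0 hm0 e T _ hT _ _ C hC
  have key : ∀ j : ℕ, sSup (specRad '' prodSet {B₁, B₂} j)
      = max (sSup (specRad '' prodSet {B₁₁, B₂₁} j))
            (sSup (specRad '' prodSet {B₁₂, B₂₂} j)) := by
    intro j
    rw [prodSet_pair_eq_range, prodSet_pair_eq_range, prodSet_pair_eq_range,
      ← Set.range_comp, ← Set.range_comp, ← Set.range_comp]
    exact sSup_range_max _ _ _ (fun ε => hpt j ε)
  have hseq : (fun j : ℕ => (sSup (specRad '' prodSet {B₁, B₂} j)) ^ ((1 : ℝ) / j))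
      = fun j : ℕ => max ((sSup (specRad '' prodSet {B₁₁, B₂₁} j)) ^ ((1 : ℝ) / j))
            ((sSup (specRad '' prodSet {B₁₂, B₂₂} j)) ^ ((1 : ℝ) / j)) := by
    funext j
    rw [key j]
    exact max_rpow (sSup_specRad_nonneg _ _) (sSup_specRad_nonneg _ _) (by positivity)
  unfold jsr
  rw [hseq]
  exact limsup_max
    (isCoboundedUnder_le_of_le Filter.atTop
      (fun j => Real.rpow_nonneg (sSup_specRad_nonneg _ _) _))
    (isCoboundedUnder_le_of_le Filter.atTop
      (fun j => Real.rpow_nonneg (sSup_specRad_nonneg _ _) _))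
    (jsr_seq_bounded hk0 B₁₁ B₂₁) (jsr_seq_bounded hm0 B₁₂ B₂₂)
end

section
/- Let A₁, …, A_m be n×n real matrices such that each A_i is block upper triangular with a common block structure: A_i has a k×k upper-left diagonal block A_{i,1} (with 1 ≤ k < n), an (n−k)×(n−k) lower-right diagonal block A_{i,2}, a k×(n−k) upper-right block, and a zero lower-left block. Then ρ({A₁, …, A_m}) = max( ρ({A_{1,1}, …, A_{m,1}}), ρ({A_{1,2}, …, A_{m,2}}) ), i.e. the joint spectral radius of the set of block upper triangular matrices equals the maximum of the joint spectral radii of the sets of corresponding diagonal blocks. -/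
open Matrix Polynomial

section auxSpectrum

variable {ι : Type*} [Fintype ι] [DecidableEq ι]

lemma jsrAux_mem_spectrum_iff (M : Matrix ι ι ℂ) (μ : ℂ) :
    μ ∈ spectrum ℂ M ↔ M.charpoly.IsRoot μ := by
  rw [spectrum.mem_iff, Matrix.isUnit_iff_isUnit_det, isUnit_iff_ne_zero, not_not]
  have : (algebraMap ℂ (Matrix ι ι ℂ) μ - M).det = M.charpoly.eval μ := by
    rw [Matrix.charpoly, ← Polynomial.coe_evalRingHom, RingHom.map_det]
    congr 1
    ext i j
    by_cases h : i = j <;>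
      simp [h, charmatrix_apply, Matrix.algebraMap_matrix_apply, Matrix.diagonal_apply]
  rw [this, Polynomial.IsRoot]

lemma jsrAux_spectrum_finite (M : Matrix ι ι ℂ) : (spectrum ℂ M).Finite :=
  (Polynomial.finite_setOf_isRoot M.charpoly_monic.ne_zero).subset
    (fun μ h => (jsrAux_mem_spectrum_iff M μ).1 h)

lemma jsrAux_spectrum_nonempty [Nonempty ι] (M : Matrix ι ι ℂ) : (spectrum ℂ M).Nonempty :=
  spectrum.nonempty_of_isAlgClosed_of_finiteDimensional ℂ M

lemma jsrAux_charpoly_fromBlocks {ι₁ ι₂ : Type*} [Fintype ι₁] [DecidableEq ι₁]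
    [Fintype ι₂] [DecidableEq ι₂]
    (B : Matrix ι₁ ι₁ ℂ) (C : Matrix ι₁ ι₂ ℂ) (D : Matrix ι₂ ι₂ ℂ) :
    (Matrix.fromBlocks B C 0 D).charpoly = B.charpoly * D.charpoly := by
  rw [Matrix.charpoly, Matrix.charmatrix_fromBlocks]
  have h0 : -((0 : Matrix ι₂ ι₁ ℂ).map Polynomial.C) = 0 := by
    ext i j; simp
  rw [h0, Matrix.det_fromBlocks_zero₂₁, Matrix.charpoly, Matrix.charpoly]

lemma jsrAux_spectrum_fromBlocks {ι₁ ι₂ : Type*} [Fintype ι₁] [DecidableEq ι₁]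
    [Fintype ι₂] [DecidableEq ι₂]
    (B : Matrix ι₁ ι₁ ℂ) (C : Matrix ι₁ ι₂ ℂ) (D : Matrix ι₂ ι₂ ℂ) :
    spectrum ℂ (Matrix.fromBlocks B C 0 D) = spectrum ℂ B ∪ spectrum ℂ D := by
  ext μ
  simp [jsrAux_mem_spectrum_iff, jsrAux_charpoly_fromBlocks, Polynomial.IsRoot,
    mul_eq_zero]

end auxSpectrum

section auxSpecRad

lemma jsrAux_setOf_eq_image {p : ℕ} (A : Matrix (Fin p) (Fin p) ℝ) :
    {r : ℝ | ∃ μ ∈ spectrum ℂ (A.map Complex.ofReal), r = ‖μ‖}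
      = (norm : ℂ → ℝ) '' spectrum ℂ (A.map Complex.ofReal) := by
  ext r; simp [eq_comm]

lemma jsrAux_specRad_eq {p : ℕ} (A : Matrix (Fin p) (Fin p) ℝ) :
    specRad A = sSup ((norm : ℂ → ℝ) '' spectrum ℂ (A.map Complex.ofReal)) := by
  rw [specRad, jsrAux_setOf_eq_image]

lemma jsrAux_specRad_nonneg {p : ℕ} (hp : 0 < p) (M : Matrix (Fin p) (Fin p) ℝ) :
    0 ≤ specRad M := by
  haveI : Nonempty (Fin p) := ⟨⟨0, hp⟩⟩
  obtain ⟨μ, hμ⟩ := jsrAux_spectrum_nonempty (M.map Complex.ofReal)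
  rw [jsrAux_specRad_eq]
  exact le_trans (norm_nonneg μ)
    (le_csSup ((jsrAux_spectrum_finite _).image _).bddAbove ⟨μ, hμ, rfl⟩)

lemma jsrAux_specRad_blockT {k l N : ℕ} (hk : 0 < k) (hl : 0 < l)
    (e : Fin k ⊕ Fin l ≃ Fin N)
    (B : Matrix (Fin k) (Fin k) ℝ) (C : Matrix (Fin k) (Fin l) ℝ)
    (D : Matrix (Fin l) (Fin l) ℝ) :
    specRad (Matrix.reindex e e (Matrix.fromBlocks B C 0 D))
      = max (specRad B) (specRad D) := by
  haveI : Nonempty (Fin k) := ⟨⟨0, hk⟩⟩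
  haveI : Nonempty (Fin l) := ⟨⟨0, hl⟩⟩
  have hmap : (Matrix.reindex e e (Matrix.fromBlocks B C 0 D)).map Complex.ofReal
      = Matrix.reindex e e (Matrix.fromBlocks (B.map Complex.ofReal) (C.map Complex.ofReal)
          0 (D.map Complex.ofReal)) := by
    rw [Matrix.reindex_apply, Matrix.reindex_apply, ← Matrix.submatrix_map,
      Matrix.fromBlocks_map]
    simp
  have hspec : spectrum ℂ ((Matrix.reindex e e (Matrix.fromBlocks B C 0 D)).map Complex.ofReal)
      = spectrum ℂ (B.map Complex.ofReal) ∪ spectrum ℂ (D.map Complex.ofReal) := by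
    rw [hmap, ← Matrix.reindexAlgEquiv_apply (R := ℂ) ℂ, AlgEquiv.spectrum_eq,
      jsrAux_spectrum_fromBlocks]
  rw [jsrAux_specRad_eq, hspec, Set.image_union,
    csSup_union (((jsrAux_spectrum_finite _).image _).bddAbove)
      ((jsrAux_spectrum_nonempty _).image _)
      (((jsrAux_spectrum_finite _).image _).bddAbove)
      ((jsrAux_spectrum_nonempty _).image _),
    jsrAux_specRad_eq, jsrAux_specRad_eq]

end auxSpecRad

section auxProd

lemma jsrAux_prodSet_range {p q : ℕ} (B : Fin q → Matrix (Fin p) (Fin p) ℝ) (j : ℕ) :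
    prodSet (Set.range B) j
      = Set.range (fun g : Fin j → Fin q => (List.ofFn fun i => B (g i)).prod) := by
  ext M
  constructor
  · rintro ⟨f, hf, rfl⟩
    choose g hg using hf
    refine ⟨g, ?_⟩
    simp only []
    congr 1
    exact congrArg List.ofFn (funext fun i => hg i)
  · rintro ⟨g, rfl⟩
    exact ⟨fun i => B (g i), fun i => ⟨g i, rfl⟩, rfl⟩

lemma jsrAux_blockProd {k l N : ℕ} (e : Fin k ⊕ Fin l ≃ Fin N) {j : ℕ}
    (B : Fin j → Matrix (Fin k) (Fin k) ℝ) (C : Fin j → Matrix (Fin k) (Fin l) ℝ)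
    (D : Fin j → Matrix (Fin l) (Fin l) ℝ) :
    ∃ C' : Matrix (Fin k) (Fin l) ℝ,
      (List.ofFn fun i => Matrix.reindex e e (Matrix.fromBlocks (B i) (C i) 0 (D i))).prod
        = Matrix.reindex e e
            (Matrix.fromBlocks (List.ofFn B).prod C' 0 (List.ofFn D).prod) := by
  induction j with
  | zero =>
    refine ⟨0, ?_⟩
    simp only [List.ofFn_zero, List.prod_nil]
    rw [← Matrix.reindexAlgEquiv_apply (R := ℝ) ℝ, Matrix.fromBlocks_one, _root_.map_one]
  | succ j ih =>
    obtain ⟨C', hC'⟩ := ih (fun i => B i.succ) (fun i => C i.succ) (fun i => D i.succ)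
    refine ⟨B 0 * C' + C 0 * (List.ofFn fun i => D i.succ).prod, ?_⟩
    rw [List.ofFn_succ, List.prod_cons, hC', List.ofFn_succ (f := B), List.prod_cons,
      List.ofFn_succ (f := D), List.prod_cons]
    simp only [← Matrix.reindexAlgEquiv_apply (R := ℝ) ℝ, ← _root_.map_mul]
    congr 1
    rw [Matrix.fromBlocks_multiply]
    congr 1 <;> simp

lemma jsrAux_sSup_range_max {ι : Type*} [Finite ι] [Nonempty ι] (f g : ι → ℝ) :
    sSup (Set.range fun i => max (f i) (g i))
      = max (sSup (Set.range f)) (sSup (Set.range g)) := by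
  apply le_antisymm
  · apply csSup_le (Set.range_nonempty _)
    rintro r ⟨i, rfl⟩
    exact max_le_max (le_csSup (Set.finite_range f).bddAbove ⟨i, rfl⟩)
      (le_csSup (Set.finite_range g).bddAbove ⟨i, rfl⟩)
  · apply max_le <;> apply csSup_le (Set.range_nonempty _) <;> rintro r ⟨i, rfl⟩
    · exact le_trans (le_max_left _ _)
        (le_csSup (Set.finite_range _).bddAbove ⟨i, rfl⟩)
    · exact le_trans (le_max_right _ _)
        (le_csSup (Set.finite_range _).bddAbove ⟨i, rfl⟩)

lemma jsrAux_max_rpow {a b c : ℝ} (ha : 0 ≤ a) (hb : 0 ≤ b) (hc : 0 ≤ c) :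
    (max a b) ^ c = max (a ^ c) (b ^ c) := by
  rcases le_total a b with h | h
  · rw [max_eq_right h, max_eq_right (Real.rpow_le_rpow ha h hc)]
  · rw [max_eq_left h, max_eq_left (Real.rpow_le_rpow hb h hc)]

lemma jsrAux_ofFn_prod_le {j : ℕ} (h : Fin j → ℝ) {Cc : ℝ}
    (h0 : ∀ i, 0 ≤ h i) (hle : ∀ i, h i ≤ Cc) :
    (List.ofFn h).prod ≤ Cc ^ j := by
  induction j with
  | zero => simp
  | succ j ih =>
    rw [List.ofFn_succ, List.prod_cons, pow_succ']
    have hC0 : 0 ≤ Cc := (h0 0).trans (hle 0)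
    have hp0 : (0:ℝ) ≤ (List.ofFn fun i => h i.succ).prod := by
      apply List.prod_nonneg
      intro x hx
      obtain ⟨i, rfl⟩ := List.mem_ofFn.mp hx
      exact h0 _
    exact mul_le_mul (hle 0) (ih _ (fun i => h0 _) (fun i => hle _)) hp0 hC0

end auxProd

section auxNorm

attribute [local instance] Matrix.linftyOpNormedRing Matrix.linftyOpNormedAlgebra

lemma jsrAux_specRad_le_norm {p : ℕ} (hp : 0 < p) (M : Matrix (Fin p) (Fin p) ℝ) :
    specRad M ≤ ‖M.map Complex.ofReal‖ := by
  haveI : Nonempty (Fin p) := ⟨⟨0, hp⟩⟩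
  rw [jsrAux_specRad_eq]
  apply csSup_le ((jsrAux_spectrum_nonempty _).image _)
  rintro r ⟨μ, hμ, rfl⟩
  exact spectrum.norm_le_norm_of_mem hμ

lemma jsrAux_specRad_prod_le {p : ℕ} (hp : 0 < p) {j : ℕ}
    (f : Fin j → Matrix (Fin p) (Fin p) ℝ) {Cc : ℝ}
    (hC : ∀ i, ‖(f i).map Complex.ofReal‖ ≤ Cc) :
    specRad (List.ofFn f).prod ≤ Cc ^ j := by
  haveI : Nonempty (Fin p) := ⟨⟨0, hp⟩⟩
  refine (jsrAux_specRad_le_norm hp _).trans ?_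
  have hmap : ((List.ofFn f).prod).map Complex.ofReal
      = (List.ofFn fun i => (f i).map Complex.ofReal).prod := by
    have := map_list_prod (Complex.ofRealHom.mapMatrix (m := Fin p)) (List.ofFn f)
    simp only [RingHom.mapMatrix_apply, List.map_ofFn] at this
    exact this
  rw [hmap]
  refine le_trans (List.norm_prod_le _) ?_
  rw [List.map_ofFn]
  exact jsrAux_ofFn_prod_le _ (fun i => norm_nonneg _) (fun i => hC i)

lemma jsrAux_sSup_nonneg {p q : ℕ} (hp : 0 < p) (hq : 0 < q)
    (B : Fin q → Matrix (Fin p) (Fin p) ℝ) (j : ℕ) :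
    0 ≤ sSup (specRad '' prodSet (Set.range B) j) := by
  rw [jsrAux_prodSet_range, ← Set.range_comp]
  have hmem : specRad ((List.ofFn fun _ : Fin j => B ⟨0, hq⟩).prod)
      ∈ Set.range (specRad ∘ fun g : Fin j → Fin q => (List.ofFn fun i => B (g i)).prod) :=
    ⟨fun _ => ⟨0, hq⟩, rfl⟩
  exact le_trans (jsrAux_specRad_nonneg hp _)
    (le_csSup (Set.finite_range _).bddAbove hmem)

lemma jsrAux_sSup_le {p q : ℕ} (hp : 0 < p) (hq : 0 < q)
    (B : Fin q → Matrix (Fin p) (Fin p) ℝ) {Cc : ℝ}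
    (hC : ∀ i, ‖(B i).map Complex.ofReal‖ ≤ Cc) (j : ℕ) :
    sSup (specRad '' prodSet (Set.range B) j) ≤ Cc ^ j := by
  haveI : Nonempty (Fin q) := ⟨⟨0, hq⟩⟩
  rw [jsrAux_prodSet_range, ← Set.range_comp]
  apply csSup_le (Set.range_nonempty _)
  rintro r ⟨g, rfl⟩
  exact jsrAux_specRad_prod_le hp _ (fun i => hC (g i))

lemma jsrAux_bddBelow {p q : ℕ} (hp : 0 < p) (hq : 0 < q)
    (B : Fin q → Matrix (Fin p) (Fin p) ℝ) :
    Filter.IsBoundedUnder (· ≥ ·) Filter.atTop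
      (fun j : ℕ => (sSup (specRad '' prodSet (Set.range B) j)) ^ ((1 : ℝ) / j)) :=
  Filter.isBoundedUnder_of
    ⟨0, fun j => Real.rpow_nonneg (jsrAux_sSup_nonneg hp hq B j) _⟩

lemma jsrAux_bddAbove {p q : ℕ} (hp : 0 < p) (hq : 0 < q)
    (B : Fin q → Matrix (Fin p) (Fin p) ℝ) :
    Filter.IsBoundedUnder (· ≤ ·) Filter.atTop
      (fun j : ℕ => (sSup (specRad '' prodSet (Set.range B) j)) ^ ((1 : ℝ) / j)) := by
  obtain ⟨Cc, hCc⟩ : ∃ Cc : ℝ, ∀ i, ‖(B i).map Complex.ofReal‖ ≤ Cc := by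
    obtain ⟨Cc, hCc⟩ := (Set.finite_range fun i => ‖(B i).map Complex.ofReal‖).bddAbove
    exact ⟨Cc, fun i => hCc ⟨i, rfl⟩⟩
  set C' : ℝ := max Cc 0 with hC'
  refine Filter.isBoundedUnder_of ⟨max C' 1, fun j => ?_⟩
  rcases Nat.eq_zero_or_pos j with rfl | hj
  · simp [Real.rpow_zero]
  · have h1 : sSup (specRad '' prodSet (Set.range B) j) ≤ C' ^ j :=
      jsrAux_sSup_le hp hq B (fun i => (hCc i).trans (le_max_left _ _)) j
    have h0 : 0 ≤ sSup (specRad '' prodSet (Set.range B) j) :=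
      jsrAux_sSup_nonneg hp hq B j
    calc (sSup (specRad '' prodSet (Set.range B) j)) ^ ((1 : ℝ) / j)
        ≤ (C' ^ j) ^ ((1 : ℝ) / j) :=
          Real.rpow_le_rpow h0 h1 (by positivity)
      _ = C' := by
          rw [one_div, Real.pow_rpow_inv_natCast (le_max_right _ _) hj.ne']
      _ ≤ max C' 1 := le_max_left _ _

end auxNorm

/-- The JSR of a family of block upper triangular matrices with a common block
structure equals the maximum of the JSRs of the families of diagonal blocks. -/
theorem jsr_blockTriangular {n k m : ℕ} (hm : 0 < m) (hk1 : 1 ≤ k) (hkn : k < n)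
    (A : Fin m → Matrix (Fin n) (Fin n) ℝ)
    (A₁ : Fin m → Matrix (Fin k) (Fin k) ℝ)
    (A₂ : Fin m → Matrix (Fin (n - k)) (Fin (n - k)) ℝ)
    (A₀ : Fin m → Matrix (Fin k) (Fin (n - k)) ℝ)
    (hA : ∀ i, A i =
      Matrix.reindex (finSumFinEquiv.trans (finCongr (Nat.add_sub_cancel' hkn.le)))
        (finSumFinEquiv.trans (finCongr (Nat.add_sub_cancel' hkn.le)))
        (Matrix.fromBlocks (A₁ i) (A₀ i) 0 (A₂ i))) :
    jsr (Set.range A) = max (jsr (Set.range A₁)) (jsr (Set.range A₂)) := by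
  have hl : 0 < n - k := Nat.sub_pos_of_lt hkn
  haveI : Nonempty (Fin m) := ⟨⟨0, hm⟩⟩
  set e : Fin k ⊕ Fin (n - k) ≃ Fin n :=
    finSumFinEquiv.trans (finCongr (Nat.add_sub_cancel' hkn.le)) with he
  have hg : ∀ (j : ℕ) (g : Fin j → Fin m),
      specRad (List.ofFn fun i => A (g i)).prod
        = max (specRad (List.ofFn fun i => A₁ (g i)).prod)
              (specRad (List.ofFn fun i => A₂ (g i)).prod) := by
    intro j g
    obtain ⟨C', hC'⟩ :=
      jsrAux_blockProd e (fun i => A₁ (g i)) (fun i => A₀ (g i)) (fun i => A₂ (g i))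
    have hfn : (List.ofFn fun i => A (g i))
        = List.ofFn fun i =>
            Matrix.reindex e e (Matrix.fromBlocks (A₁ (g i)) (A₀ (g i)) 0 (A₂ (g i))) :=
      congrArg List.ofFn (funext fun i => hA (g i))
    rw [hfn, hC', jsrAux_specRad_blockT hk1 hl e]
  have key : ∀ j : ℕ, sSup (specRad '' prodSet (Set.range A) j)
      = max (sSup (specRad '' prodSet (Set.range A₁) j))
            (sSup (specRad '' prodSet (Set.range A₂) j)) := by
    intro j
    rw [jsrAux_prodSet_range, jsrAux_prodSet_range, jsrAux_prodSet_range,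
      ← Set.range_comp, ← Set.range_comp, ← Set.range_comp]
    simp only [Function.comp_def]
    have hfun : (fun g : Fin j → Fin m => specRad (List.ofFn fun i => A (g i)).prod)
        = fun g : Fin j → Fin m =>
            max (specRad (List.ofFn fun i => A₁ (g i)).prod)
                (specRad (List.ofFn fun i => A₂ (g i)).prod) :=
      funext fun g => hg j g
    rw [hfun, jsrAux_sSup_range_max]
  have hb₁ : ∀ j : ℕ, 0 ≤ sSup (specRad '' prodSet (Set.range A₁) j) :=
    jsrAux_sSup_nonneg hk1 hm A₁
  have hb₂ : ∀ j : ℕ, 0 ≤ sSup (specRad '' prodSet (Set.range A₂) j) :=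
    jsrAux_sSup_nonneg hl hm A₂
  have hfun2 : (fun j : ℕ => (sSup (specRad '' prodSet (Set.range A) j)) ^ ((1 : ℝ) / j))
      = fun j : ℕ =>
          max ((sSup (specRad '' prodSet (Set.range A₁) j)) ^ ((1 : ℝ) / j))
              ((sSup (specRad '' prodSet (Set.range A₂) j)) ^ ((1 : ℝ) / j)) := by
    funext j
    rw [key j, jsrAux_max_rpow (hb₁ j) (hb₂ j) (by positivity)]
  rw [jsr, jsr, jsr, hfun2]
  exact limsup_max
    ((jsrAux_bddBelow hk1 hm A₁).isCoboundedUnder_le)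
    ((jsrAux_bddBelow hl hm A₂).isCoboundedUnder_le)
    (jsrAux_bddAbove hk1 hm A₁)
    (jsrAux_bddAbove hl hm A₂)
end
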